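/- Let p be an odd prime, K the p-th cyclotomic field \mathbb{Q}(\zeta_p), and \zeta \in K a primitive p-th root of unity. Then for every natural number n one has the identity (\zeta + \zeta^{-1})^n \cdot (\zeta - \zeta^{-1}) = \sum_{k=1}^{p-1} d_p(n,k) \cdot (\zeta^k - \zeta^{-k}) in K. -/

import Mathlib

/-- `binZ n j` is the binomial coefficient `n choose j` for `j : ℤ`, which is `0`
unless `0 ≤ j ≤ n`. -/
def binZ (n : ℕ) (j : ℤ) : ℤ := if 0 ≤ j then (n.choose j.toNat : ℤ) else 0

/-- `catC n j = C(n,j) = binom(n,j) - binom(n,j-1)`. -/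
def catC (n : ℕ) (j : ℤ) : ℤ := binZ n j - binZ n (j - 1)

/-- `dP p n k = d_p(n,k) = ∑_{s ∈ ℤ} C(n, (n+1-k)/2 + s p)` when `k ≡ n+1 (mod 2)`,
and `0` otherwise. -/
noncomputable def dP (p n k : ℕ) : ℤ :=
  if k % 2 = (n + 1) % 2 then ∑ᶠ s : ℤ, catC n (((n : ℤ) + 1 - k) / 2 + s * p) else 0

lemma binZ_zero_of_neg {n : ℕ} {j : ℤ} (h : j < 0) : binZ n j = 0 := by
  simp [binZ, not_le.2 h]

lemma binZ_zero_of_gt {n : ℕ} {j : ℤ} (h : (n : ℤ) < j) : binZ n j = 0 := by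
  unfold binZ
  rcases le_or_gt 0 j with h0 | h0
  · rw [if_pos h0, Nat.choose_eq_zero_of_lt (by omega)]; simp
  · rw [if_neg (not_le.2 h0)]

lemma catC_eq_zero {n : ℕ} {j : ℤ} (h : j < 0 ∨ (n : ℤ) + 1 < j) : catC n j = 0 := by
  rcases h with h | h
  · rw [catC, binZ_zero_of_neg h, binZ_zero_of_neg (by omega), sub_zero]
  · rw [catC, binZ_zero_of_gt (by omega), binZ_zero_of_gt (by omega), sub_zero]

lemma binZ_pascal (n : ℕ) (j : ℤ) : binZ (n + 1) j = binZ n j + binZ n (j - 1) := by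
  rcases lt_trichotomy j 0 with h | h | h
  · rw [binZ_zero_of_neg h, binZ_zero_of_neg h, binZ_zero_of_neg (by omega)]; ring
  · subst h; simp [binZ]
  · have h1 : (0:ℤ) ≤ j := le_of_lt h
    have h2 : (0:ℤ) ≤ j - 1 := by omega
    have h3 : j.toNat = (j-1).toNat + 1 := by omega
    rw [binZ, binZ, binZ, if_pos h1, if_pos h1, if_pos h2, h3,
      Nat.choose_succ_succ' ]
    push_cast; ring

lemma binZ_symm (n : ℕ) (j : ℤ) : binZ n ((n : ℤ) - j) = binZ n j := by
  rcases lt_or_ge j 0 with h | h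
  · rw [binZ_zero_of_neg h, binZ_zero_of_gt (by omega)]
  rcases le_or_gt j n with h2 | h2
  · rw [binZ, binZ, if_pos (by omega), if_pos h]
    have : ((n:ℤ) - j).toNat = n - j.toNat := by omega
    rw [this, Nat.choose_symm (by omega)]
  · rw [binZ_zero_of_gt h2, binZ_zero_of_neg (by omega)]

lemma catC_pascal (n : ℕ) (j : ℤ) : catC (n + 1) j = catC n j + catC n (j - 1) := by
  unfold catC; rw [binZ_pascal, binZ_pascal]; ring

lemma catC_symm (n : ℕ) (j : ℤ) : catC n ((n : ℤ) + 1 - j) = -catC n j := by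
  unfold catC
  have e1 : (n:ℤ) + 1 - j = (n:ℤ) - (j - 1) := by ring
  have e2 : (n:ℤ) + 1 - j - 1 = (n:ℤ) - j := by ring
  rw [e1, binZ_symm]
  have e3 : (n:ℤ) - (j - 1) - 1 = (n:ℤ) - j := by ring
  rw [e3, binZ_symm]; ring

/-- Integer-indexed version of `dP`. -/
noncomputable def D (p n : ℕ) (k : ℤ) : ℤ :=
  if k % 2 = ((n : ℤ) + 1) % 2 then ∑ᶠ s : ℤ, catC n (((n : ℤ) + 1 - k) / 2 + s * p)
  else 0

lemma dP_eq_D (p n k : ℕ) : dP p n k = D p n (k : ℤ) := by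
  unfold dP D
  have h : (k % 2 = (n + 1) % 2) ↔ ((k : ℤ) % 2 = ((n : ℤ) + 1) % 2) := by omega
  split_ifs with h1 h2 h2
  · rfl
  · exact absurd (h.mp h1) h2
  · exact absurd (h.mpr h2) h1
  · rfl

lemma catC_support_finite (n : ℕ) (j₀ : ℤ) {p : ℕ} (hp : 0 < p) :
    (Function.support fun s : ℤ => catC n (j₀ + s * p)).Finite := by
  apply Set.Finite.subset (Set.finite_Icc (-(j₀.natAbs + n + 2 : ℤ)) (j₀.natAbs + n + 2))
  intro s hs
  simp only [Function.mem_support] at hs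
  simp only [Set.mem_Icc]
  by_contra hmem
  apply hs; apply catC_eq_zero
  push_neg at hmem
  have hp1 : (1 : ℤ) ≤ p := by exact_mod_cast hp
  rcases le_or_gt 0 s with h | h
  · have h2 : s * 1 ≤ s * p := mul_le_mul_of_nonneg_left hp1 h
    rw [mul_one] at h2
    obtain ⟨t, ht⟩ : ∃ t, s * (p:ℤ) = t := ⟨_, rfl⟩
    rw [ht] at h2 ⊢; omega
  · have h2 : s * p ≤ s * 1 := mul_le_mul_of_nonpos_left hp1 (le_of_lt h)
    rw [mul_one] at h2
    obtain ⟨t, ht⟩ : ∃ t, s * (p:ℤ) = t := ⟨_, rfl⟩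
    rw [ht] at h2 ⊢; omega

lemma D_shift (p n : ℕ) (k : ℤ) : D p n (k + 2 * p) = D p n k := by
  unfold D
  have hpar : ((k + 2*p) % 2 = ((n:ℤ)+1) % 2) ↔ (k % 2 = ((n:ℤ)+1) % 2) := by omega
  split_ifs with h1 h2 h2
  · have key : ∀ s : ℤ, ((n:ℤ) + 1 - (k + 2*p)) / 2 + s * p
        = ((n:ℤ) + 1 - k) / 2 + (Equiv.subRight (1:ℤ) s) * p := by
      intro s
      have e1 : ((n:ℤ) + 1 - (k + 2*p)) / 2 = ((n:ℤ) + 1 - k) / 2 - p := by omega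
      rw [e1]; simp [Equiv.subRight]; ring
    rw [finsum_congr fun s => congrArg (catC n) (key s)]
    exact finsum_comp_equiv (Equiv.subRight (1:ℤ))
      (f := fun s => catC n (((n:ℤ) + 1 - k) / 2 + s * p))
  · exact absurd (hpar.mp h1) h2
  · exact absurd (hpar.mpr h2) h1
  · rfl

lemma D_neg (p n : ℕ) (k : ℤ) : D p n (-k) = -D p n k := by
  unfold D
  have hpar : ((-k) % 2 = ((n:ℤ)+1) % 2) ↔ (k % 2 = ((n:ℤ)+1) % 2) := by omega
  split_ifs with h1 h2 h2
  · have key : ∀ s : ℤ, catC n (((n:ℤ) + 1 - (-k)) / 2 + s * p)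
        = -catC n (((n:ℤ) + 1 - k) / 2 + ((Equiv.neg ℤ) s) * p) := by
      intro s
      have e1 : ((n:ℤ) + 1 - (-k)) / 2 = ((n:ℤ) + 1) - ((n:ℤ) + 1 - k) / 2 := by omega
      have e2 : ((n:ℤ) + 1 - (-k)) / 2 + s * p
          = (n:ℤ) + 1 - (((n:ℤ) + 1 - k) / 2 + (-s) * p) := by rw [e1]; ring
      rw [e2, catC_symm]; simp
    rw [finsum_congr key, finsum_neg_distrib]
    congr 1
    exact finsum_comp_equiv (Equiv.neg ℤ)
      (f := fun s => catC n (((n:ℤ) + 1 - k) / 2 + s * p))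
  · exact absurd (hpar.mp h1) h2
  · exact absurd (hpar.mpr h2) h1
  · ring

lemma D_zero (p n : ℕ) : D p n 0 = 0 := by
  have := D_neg p n 0
  rw [neg_zero] at this; omega

lemma D_p (p n : ℕ) : D p n p = 0 := by
  have h1 := D_shift p n (-(p:ℤ))
  have h2 : -(p:ℤ) + 2 * p = p := by ring
  rw [h2, D_neg] at h1; omega

lemma D_pascal (p n : ℕ) (hp : 0 < p) (k : ℤ) :
    D p (n + 1) k = D p n (k - 1) + D p n (k + 1) := by
  unfold D
  push_cast
  by_cases h : k % 2 = ((n:ℤ) + 1 + 1) % 2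
  · rw [if_pos h, if_pos (by omega), if_pos (by omega)]
    have key : ∀ s : ℤ, catC (n+1) (((n:ℤ) + 1 + 1 - k) / 2 + s * p)
        = catC n (((n:ℤ) + 1 - (k-1)) / 2 + s * p)
          + catC n (((n:ℤ) + 1 - (k+1)) / 2 + s * p) := by
      intro s
      have a1 : ((n:ℤ) + 1 - (k-1)) / 2 + s * p = ((n:ℤ) + 1 + 1 - k) / 2 + s * p := by
        have : ((n:ℤ) + 1 - (k-1)) / 2 = ((n:ℤ) + 1 + 1 - k) / 2 := by omega
        rw [this]
      have a2 : ((n:ℤ) + 1 - (k+1)) / 2 + s * p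
          = (((n:ℤ) + 1 + 1 - k) / 2 + s * p) - 1 := by
        have : ((n:ℤ) + 1 - (k+1)) / 2 = ((n:ℤ) + 1 + 1 - k) / 2 - 1 := by omega
        rw [this]; ring
      rw [a1, a2, catC_pascal]
    rw [finsum_congr key]
    exact finsum_add_distrib (catC_support_finite n _ hp) (catC_support_finite n _ hp)
  · rw [if_neg h, if_neg (by omega), if_neg (by omega)]; ring

lemma mul_p_bound (p : ℕ) (hp : 0 < p) {s : ℤ} (hs : s ≠ 0) :
    s * p ≤ -(p:ℤ) ∨ (p:ℤ) ≤ s * p := by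
  have hp1 : (1:ℤ) ≤ p := by exact_mod_cast hp
  rcases lt_or_gt_of_ne hs with h | h
  · left
    have : s * p ≤ (-1) * p := mul_le_mul_of_nonneg_right (by omega) (by omega)
    omega
  · right
    have : 1 * (p:ℤ) ≤ s * p := mul_le_mul_of_nonneg_right (by omega) (by omega)
    omega

lemma D_base_one {p : ℕ} (hp : 3 ≤ p) : D p 0 1 = 1 := by
  unfold D
  rw [if_pos (by norm_num)]
  have : ∑ᶠ s : ℤ, catC 0 ((((0:ℕ):ℤ) + 1 - 1) / 2 + s * p)
      = catC 0 ((((0:ℕ):ℤ) + 1 - 1) / 2 + 0 * p) := by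
    apply finsum_eq_single
    intro s hs
    apply catC_eq_zero
    obtain ⟨t, ht⟩ : ∃ t, s * (p:ℤ) = t := ⟨_, rfl⟩
    rcases mul_p_bound p (by omega) hs with h | h <;> (rw [ht] at h ⊢; push_cast; omega)
  rw [this]
  norm_num [catC, binZ]

lemma D_base_ne {p : ℕ} (hp : 3 ≤ p) {k : ℤ} (h1 : 1 ≤ k) (h2 : k ≤ (p:ℤ) - 1)
    (hk : k ≠ 1) : D p 0 k = 0 := by
  unfold D
  by_cases hpar : k % 2 = (((0:ℕ):ℤ) + 1) % 2
  · rw [if_pos hpar]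
    apply finsum_eq_zero_of_forall_eq_zero
    intro s
    apply catC_eq_zero
    obtain ⟨t, ht⟩ : ∃ t, s * (p:ℤ) = t := ⟨_, rfl⟩
    rcases eq_or_ne s 0 with rfl | hs
    · push_cast at hpar ⊢; omega
    · rcases mul_p_bound p (by omega) hs with h | h <;>
        (rw [ht] at h ⊢; push_cast at hpar ⊢; omega)
  · rw [if_neg hpar]

lemma sum_shift {M : Type*} [AddCommMonoid M] (f : ℤ → M) (a b : ℤ) :
    ∑ k ∈ Finset.Icc a b, f (k + 1) = ∑ k ∈ Finset.Icc (a + 1) (b + 1), f k := by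
  rw [← Finset.map_add_right_Icc a b 1, Finset.sum_map]
  rfl

lemma sum_shift' {M : Type*} [AddCommMonoid M] (f : ℤ → M) (a b : ℤ) :
    ∑ k ∈ Finset.Icc a b, f (k - 1) = ∑ k ∈ Finset.Icc (a - 1) (b - 1), f k := by
  rw [show a - 1 = a + (-1) by ring, show b - 1 = b + (-1) by ring,
    ← Finset.map_add_right_Icc a b (-1), Finset.sum_map]
  apply Finset.sum_congr rfl
  intro x _
  congr 1

lemma sum_shift_boundary {M : Type*} [AddCommMonoid M] (g : ℤ → M) (a b : ℤ) (hab : a ≤ b)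
    (ha : g a = 0) (hb : g (b + 1) = 0) :
    ∑ k ∈ Finset.Icc (a + 1) (b + 1), g k = ∑ k ∈ Finset.Icc a b, g k := by
  have h1 : Finset.Icc a (b + 1) = insert a (Finset.Icc (a + 1) (b + 1)) := by
    ext x; simp only [Finset.mem_Icc, Finset.mem_insert]; omega
  have h2 : Finset.Icc a (b + 1) = insert (b + 1) (Finset.Icc a b) := by
    ext x; simp only [Finset.mem_Icc, Finset.mem_insert]; omega
  have n1 : a ∉ Finset.Icc (a + 1) (b + 1) := by simp
  have n2 : b + 1 ∉ Finset.Icc a b := by simp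
  have e1 : ∑ k ∈ Finset.Icc a (b + 1), g k = ∑ k ∈ Finset.Icc (a + 1) (b + 1), g k := by
    rw [h1, Finset.sum_insert n1, ha, zero_add]
  have e2 : ∑ k ∈ Finset.Icc a (b + 1), g k = ∑ k ∈ Finset.Icc a b, g k := by
    rw [h2, Finset.sum_insert n2, hb, zero_add]
  rw [← e1, e2]

set_option linter.unnecessarySeqFocus false in
theorem key_identity {K : Type*} [Field K] (p : ℕ) (hp3 : 3 ≤ p) (ζ : K) (hζ0 : ζ ≠ 0)
    (hζp : ζ ^ p = 1) (n : ℕ) :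
    (ζ + ζ⁻¹) ^ n * (ζ - ζ⁻¹) =
      ∑ k ∈ Finset.Icc (1:ℤ) ((p:ℤ) - 1), (D p n k : K) * (ζ ^ k - ζ ^ (-k)) := by
  have hEp : ζ ^ ((p:ℤ) - 1 + 1) - ζ ^ (-((p:ℤ) - 1 + 1)) = 0 := by
    rw [show (p:ℤ) - 1 + 1 = (p:ℤ) by ring, zpow_neg, zpow_natCast, hζp, inv_one, sub_self]
  induction n with
  | zero =>
    rw [pow_zero, one_mul]
    rw [Finset.sum_eq_single_of_mem 1 (by simp only [Finset.mem_Icc]; omega)]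
    · rw [D_base_one hp3]; push_cast
      rw [one_mul, zpow_one, zpow_neg_one]
    · intro k hk hne
      rw [Finset.mem_Icc] at hk
      rw [D_base_ne hp3 hk.1 hk.2 hne]; push_cast; rw [zero_mul]
  | succ n ih =>
    have hE : ∀ k : ℤ, (ζ + ζ⁻¹) * (ζ ^ k - ζ ^ (-k)) =
        (ζ ^ (k+1) - ζ ^ (-(k+1))) + (ζ ^ (k-1) - ζ ^ (-(k-1))) := by
      intro k
      have h1 : ζ ^ (k+1) = ζ ^ k * ζ := by rw [zpow_add₀ hζ0, zpow_one]
      have h2 : ζ ^ (-(k+1)) = ζ ^ (-k) * ζ⁻¹ := by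
        rw [show -(k+1) = -k + (-1) by ring, zpow_add₀ hζ0, zpow_neg_one]
      have h3 : ζ ^ (k-1) = ζ ^ k * ζ⁻¹ := by
        rw [show k-1 = k + (-1) by ring, zpow_add₀ hζ0, zpow_neg_one]
      have h4 : ζ ^ (-(k-1)) = ζ ^ (-k) * ζ := by
        rw [show -(k-1) = -k + 1 by ring, zpow_add₀ hζ0, zpow_one]
      rw [h1, h2, h3, h4]; ring
    calc (ζ + ζ⁻¹) ^ (n+1) * (ζ - ζ⁻¹)
        = (ζ + ζ⁻¹) * ((ζ + ζ⁻¹) ^ n * (ζ - ζ⁻¹)) := by ring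
      _ = ∑ k ∈ Finset.Icc (1:ℤ) ((p:ℤ) - 1),
            ((D p n k : K) * (ζ ^ (k+1) - ζ ^ (-(k+1)))
              + (D p n k : K) * (ζ ^ (k-1) - ζ ^ (-(k-1)))) := by
          rw [ih, Finset.mul_sum]
          apply Finset.sum_congr rfl
          intro k _
          rw [mul_left_comm, hE k, mul_add]
      _ = (∑ k ∈ Finset.Icc (1:ℤ) ((p:ℤ) - 1), (D p n (k-1) : K) * (ζ ^ k - ζ ^ (-k)))
          + ∑ k ∈ Finset.Icc (1:ℤ) ((p:ℤ) - 1), (D p n (k+1) : K) * (ζ ^ k - ζ ^ (-k)) := by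
          rw [Finset.sum_add_distrib]
          congr 1
          · -- shift up
            have hs := sum_shift (fun k => (D p n (k-1) : K) * (ζ ^ k - ζ ^ (-k))) 1 ((p:ℤ)-1)
            simp only [add_sub_cancel_right] at hs
            rw [hs]
            apply sum_shift_boundary _ 1 ((p:ℤ)-1) (by omega)
            · rw [show (1:ℤ) - 1 = 0 from rfl, D_zero]; push_cast; rw [zero_mul]
            · rw [hEp, mul_zero]
          · -- shift down
            have hs := sum_shift' (fun k => (D p n (k+1) : K) * (ζ ^ k - ζ ^ (-k))) 1 ((p:ℤ)-1)
            simp only [sub_add_cancel] at hs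
            rw [hs]
            have hb := sum_shift_boundary (fun k => (D p n (k+1) : K) * (ζ ^ k - ζ ^ (-k)))
              0 ((p:ℤ)-2) (by omega) ?_ ?_
            · rw [show (1:ℤ) - 1 = 0 by ring, show (p:ℤ) - 1 - 1 = (p:ℤ) - 2 by ring, ← hb]
              apply Finset.sum_congr
              · congr 1 <;> ring
              · intros; rfl
            · show (D p n (0+1) : K) * (ζ ^ (0:ℤ) - ζ ^ (-(0:ℤ))) = 0
              norm_num
            · show (D p n ((p:ℤ)-2+1+1) : K) * (ζ ^ ((p:ℤ)-2+1) - ζ ^ (-((p:ℤ)-2+1))) = 0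
              rw [show (p:ℤ) - 2 + 1 + 1 = (p:ℤ) by ring, D_p]
              push_cast; rw [zero_mul]
      _ = ∑ k ∈ Finset.Icc (1:ℤ) ((p:ℤ) - 1), (D p (n+1) k : K) * (ζ ^ k - ζ ^ (-k)) := by
          rw [← Finset.sum_add_distrib]
          apply Finset.sum_congr rfl
          intro k _
          rw [D_pascal p n (by omega) k]; push_cast; ring

/-- For an odd prime `p`, a primitive `p`-th root of unity `ζ` in the `p`-th cyclotomic
field `ℚ(ζ_p)`, and every `n : ℕ`:
`(ζ + ζ⁻¹)^n (ζ - ζ⁻¹) = ∑_{k=1}^{p-1} d_p(n,k) (ζ^k - ζ^{-k})`. -/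
theorem cyclotomic_dP_identity (p : ℕ) (hp : p.Prime) (hodd : Odd p)
    (ζ : CyclotomicField p ℚ) (hζ : IsPrimitiveRoot ζ p) (n : ℕ) :
    (ζ + ζ⁻¹) ^ n * (ζ - ζ⁻¹) =
      ∑ k ∈ Finset.Icc 1 (p - 1),
        (dP p n k : CyclotomicField p ℚ) * (ζ ^ k - ζ⁻¹ ^ k) := by
  have hp3 : 3 ≤ p := by
    have h2 := hp.two_le
    have h3 := Nat.odd_iff.mp hodd
    omega
  have hζ0 : ζ ≠ 0 := hζ.ne_zero (by omega)
  have hζp : ζ ^ p = 1 := hζ.pow_eq_one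
  rw [key_identity p hp3 ζ hζ0 hζp n]
  have hmap : Finset.Icc (1:ℤ) ((p:ℤ) - 1)
      = Finset.map ⟨(Nat.cast : ℕ → ℤ), Nat.cast_injective⟩ (Finset.Icc 1 (p-1)) := by
    ext x
    simp only [Finset.mem_map, Finset.mem_Icc, Function.Embedding.coeFn_mk]
    constructor
    · rintro ⟨hx1, hx2⟩
      exact ⟨x.toNat, ⟨by omega, by omega⟩, by omega⟩
    · rintro ⟨a, ⟨ha1, ha2⟩, rfl⟩
      omega
  rw [hmap, Finset.sum_map]
  apply Finset.sum_congr rfl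
  intro k _
  simp only [Function.Embedding.coeFn_mk]
  rw [dP_eq_D]
  congr 1
  rw [zpow_neg, zpow_natCast, inv_pow]
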